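/- arXiv:1111.2301 — 5 statements merged into one kernel-verified Lean document; each statement's English description precedes it below -/
import Mathlib

section
/- Let C be a linear code of length n and dimension k over a finite field F_q that is perfect with radius ρ (i.e., every vector of F_q^n lies at Hamming distance at most ρ from exactly one codeword of C), and let S : F_q^n → F_q^{n-k-r} × F_q^r be a surjective linear map whose kernel is C, for some integer 0 ≤ r ≤ n-k. Suppose the inequality q^{n-k} + 1 ≤ q^r + Σ_{i=0}^{ρ} (q-1)^i · C(n-ℓ, i) holds, where ℓ is a nonnegative integer with ℓ ≤ n. Then for every cover-data x ∈ F_q^n, every message m ∈ F_q^{n-k-r}, and every set I ⊆ {1,…,n} of locked coordinates with |I| = ℓ, there exist a vector y ∈ F_q^n and a vector R ∈ F_q^r such that S(y) = (m, R), d(x,y) ≤ ρ, and y_i = x_i for all i ∈ I. -/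
open Finset in
lemma card_locked_ball {n q ρ ℓ : ℕ} {F : Type} [Fintype F] [DecidableEq F]
    (hq : Fintype.card F = q) (x : Fin n → F) (I : Finset (Fin n)) (hI : I.card = ℓ) :
    (Finset.univ.filter fun y : Fin n → F =>
        hammingDist x y ≤ ρ ∧ ∀ i ∈ I, y i = x i).card
      = ∑ i ∈ Finset.range (ρ + 1), (q - 1) ^ i * (n - ℓ).choose i := by
  classical
  set G : Finset (Fin n) → Finset (Fin n → F) :=
    fun s => Fintype.piFinset fun j => if j ∈ s then univ.erase (x j) else {x j} with hG
  have hmemG : ∀ s (y : Fin n → F),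
      y ∈ G s ↔ ∀ j, (j ∈ s → y j ≠ x j) ∧ (j ∉ s → y j = x j) := by
    intro s y
    simp only [hG, Fintype.mem_piFinset]
    refine forall_congr' fun j => ?_
    by_cases h : j ∈ s <;> simp [h]
  have hsupp : ∀ s (y : Fin n → F), y ∈ G s →
      s = univ.filter fun j => x j ≠ y j := by
    intro s y hy
    ext j
    rcases (hmemG s y).mp hy j with ⟨h1, h2⟩
    simp only [mem_filter, mem_univ, true_and]
    constructor
    · intro hj; exact fun h => (h1 hj) h.symm
    · intro hj; by_contra hj'
      exact hj (h2 hj').symm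
  set A : Finset (Finset (Fin n)) :=
    (Finset.range (ρ + 1)).biUnion (fun i => Finset.powersetCard i Iᶜ) with hA
  have hdist : ∀ y : Fin n → F,
      hammingDist x y = (univ.filter fun j => x j ≠ y j).card := fun _ => rfl
  have key : (Finset.univ.filter fun y : Fin n → F =>
      hammingDist x y ≤ ρ ∧ ∀ i ∈ I, y i = x i) = A.biUnion G := by
    ext y
    simp only [mem_filter, mem_univ, true_and, mem_biUnion, hA, Finset.mem_range,
      Finset.mem_powersetCard]
    constructor
    · rintro ⟨h1, h2⟩
      refine ⟨univ.filter fun j => x j ≠ y j, ⟨hammingDist x y,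
        by omega, ⟨?_, (hdist y).symm⟩⟩, ?_⟩
      · intro j hj
        simp only [mem_filter, mem_univ, true_and] at hj
        simp only [Finset.mem_compl]
        intro hjI
        exact hj (h2 j hjI).symm
      · rw [hmemG]
        intro j
        constructor
        · intro hj
          simp only [mem_filter, mem_univ, true_and] at hj
          exact fun h => hj h.symm
        · intro hj
          by_contra h
          exact hj (by simp only [mem_filter, mem_univ, true_and]; exact fun h' => h h'.symm)
    · rintro ⟨s, ⟨i, hi, hsub, hcard⟩, hy⟩
      have hs := hsupp s y hy
      constructor
      · rw [hdist y, ← hs, hcard]; omega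
      · intro j hjI
        exact ((hmemG s y).mp hy j).2 fun hjs => (Finset.mem_compl.mp (hsub hjs)) hjI
  rw [key]
  have hGdisj : ∀ s ∈ A, ∀ t ∈ A, s ≠ t → Disjoint (G s) (G t) := by
    intro s _ t _ hst
    rw [Finset.disjoint_left]
    intro y hys hyt
    exact hst ((hsupp s y hys).trans (hsupp t y hyt).symm)
  rw [Finset.card_biUnion hGdisj]
  have hGcard : ∀ s : Finset (Fin n), (G s).card = (q - 1) ^ s.card := by
    intro s
    rw [hG]
    rw [Fintype.card_piFinset]
    have h1 : ∀ j : Fin n,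
        ((if j ∈ s then univ.erase (x j) else {x j}) : Finset F).card
          = if j ∈ s then q - 1 else 1 := by
      intro j
      by_cases h : j ∈ s <;>
        simp [h, Finset.card_erase_of_mem, Finset.card_univ, hq]
    simp only [h1]
    rw [Finset.prod_ite_mem, Finset.univ_inter, Finset.prod_const]
  rw [Finset.sum_biUnion]
  · refine Finset.sum_congr rfl fun i _ => ?_
    have h2 : ∀ s ∈ Finset.powersetCard i Iᶜ, (G s).card = (q - 1) ^ i := by
      intro s hs
      rw [hGcard, (Finset.mem_powersetCard.mp hs).2]
    rw [Finset.sum_congr rfl h2, Finset.sum_const, Finset.card_powersetCard,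
      Finset.card_compl, Fintype.card_fin, hI, smul_eq_mul, mul_comm]
  · intro i hi j hj hij
    exact Finset.disjoint_coe.mp <| by
      exact_mod_cast (Finset.pairwise_disjoint_powersetCard Iᶜ hij)

/-- Sufficient condition for the randomized bounded syndrome coding problem for
wet paper to be solvable with a perfect code of radius `ρ`:
if `q^(n-k) + 1 ≤ q^r + ∑_{i=0}^{ρ} (q-1)^i C(n-ℓ, i)`, then for every cover `x`, message `m`
and set `I` of `ℓ` locked coordinates there exist `y` and a random part `R` with
`S y = (m, R)`, `d(x,y) ≤ ρ` and `y` agreeing with `x` on `I`. -/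
theorem randomized_wet_paper_of_perfect
    (q n k r ρ ℓ : ℕ) (F : Type) [Field F] [Fintype F] [DecidableEq F]
    (hq : Fintype.card F = q) (hr : r ≤ n - k) (hℓ : ℓ ≤ n)
    (C : Submodule F (Fin n → F)) (hk : Module.finrank F C = k)
    (hperf : ∀ v : Fin n → F, ∃! c, c ∈ C ∧ hammingDist v c ≤ ρ)
    (S : (Fin n → F) →ₗ[F] (Fin (n - k - r) → F) × (Fin r → F))
    (hS_surj : Function.Surjective S)
    (hS_ker : LinearMap.ker S = C)
    (hineq : q ^ (n - k) + 1 ≤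
      q ^ r + ∑ i ∈ Finset.range (ρ + 1), (q - 1) ^ i * (n - ℓ).choose i) :
    ∀ (x : Fin n → F) (m : Fin (n - k - r) → F) (I : Finset (Fin n)), I.card = ℓ →
      ∃ (y : Fin n → F) (R : Fin r → F),
        S y = (m, R) ∧ hammingDist x y ≤ ρ ∧ ∀ i ∈ I, y i = x i := by
  intro x m I hI
  classical
  set B : Finset (Fin n → F) := Finset.univ.filter fun y : Fin n → F =>
    hammingDist x y ≤ ρ ∧ ∀ i ∈ I, y i = x i with hB
  have hBcard : B.card = ∑ i ∈ Finset.range (ρ + 1), (q - 1) ^ i * (n - ℓ).choose i :=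
    card_locked_ball hq x I hI
  -- S is injective on B
  have hinj : Set.InjOn S B := by
    intro y hy y' hy' h
    simp only [hB, Finset.coe_filter, Set.mem_setOf_eq, Finset.mem_univ, true_and] at hy hy'
    have hc : y - y' ∈ C := by
      rw [← hS_ker]
      simp only [LinearMap.mem_ker, map_sub, h, sub_self]
    obtain ⟨c, _, huniq⟩ := hperf (x - y')
    have h0 : (0 : Fin n → F) = c :=
      huniq 0 ⟨C.zero_mem, by
        rw [hammingDist_zero_right, ← neg_add_eq_sub, ← hammingDist_eq_hammingNorm, hammingDist_comm]
        exact hy'.1⟩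
    have h1 : y - y' = c :=
      huniq (y - y') ⟨hc, by
        rw [hammingDist_eq_hammingNorm]
        have hxy : -(x - y') + (y - y') = -x + y := by abel
        rw [hxy, ← hammingDist_eq_hammingNorm]
        exact hy.1⟩
    exact sub_eq_zero.mp (h1.trans h0.symm)
  have himg : (B.image S).card = B.card := Finset.card_image_of_injOn hinj
  have hq1 : 1 ≤ q := by rw [← hq]; exact Fintype.card_pos
  have hex : ∃ y ∈ B, (S y).1 = m := by
    by_contra hcon
    push_neg at hcon
    have hsub : B.image S ⊆
        Finset.univ.filter fun t : (Fin (n - k - r) → F) × (Fin r → F) => ¬ t.1 = m := by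
      intro t ht
      obtain ⟨y, hy, rfl⟩ := Finset.mem_image.mp ht
      simp only [Finset.mem_filter, Finset.mem_univ, true_and]
      exact hcon y hy
    have hT : Fintype.card ((Fin (n - k - r) → F) × (Fin r → F)) = q ^ (n - k) := by
      rw [Fintype.card_prod, Fintype.card_fun, Fintype.card_fun, Fintype.card_fin,
        Fintype.card_fin, hq, ← pow_add, Nat.sub_add_cancel hr]
    have hGood : (Finset.univ.filter
        fun t : (Fin (n - k - r) → F) × (Fin r → F) => t.1 = m).card = q ^ r := by
      have heq : (Finset.univ.filter
          fun t : (Fin (n - k - r) → F) × (Fin r → F) => t.1 = m)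
          = Finset.univ.image (fun R : Fin r → F => (m, R)) := by
        ext t
        simp only [Finset.mem_filter, Finset.mem_univ, true_and, Finset.mem_image]
        constructor
        · intro h; exact ⟨t.2, by rw [← h]⟩
        · rintro ⟨R, rfl⟩; rfl
      rw [heq, Finset.card_image_of_injective _ (fun a b h => (Prod.ext_iff.mp h).2),
        Finset.card_univ, Fintype.card_fun, Fintype.card_fin, hq]
    have hBad : (Finset.univ.filter
        fun t : (Fin (n - k - r) → F) × (Fin r → F) => ¬ t.1 = m).card
        = q ^ (n - k) - q ^ r := by
      rw [Finset.filter_not, Finset.card_sdiff_of_subset (Finset.filter_subset _ _),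
        Finset.card_univ, hT, hGood]
    have hle : B.card ≤ q ^ (n - k) - q ^ r := by
      rw [← himg, ← hBad]
      exact Finset.card_le_card hsub
    have hpow : q ^ r ≤ q ^ (n - k) := Nat.pow_le_pow_right hq1 hr
    rw [hBcard] at hle
    omega
  obtain ⟨y, hy, hym⟩ := hex
  simp only [hB, Finset.mem_filter, Finset.mem_univ, true_and] at hy
  exact ⟨y, (S y).2, by rw [← hym], hy.1, hy.2⟩
end

section
/- Let q be a prime power, p ≥ 2 an integer, n = (q^p - 1)/(q - 1), and let C be a linear code of length n and dimension n - p over a finite field F_q that is perfect with radius 1 (i.e., every vector of F_q^n lies at Hamming distance at most 1 from exactly one codeword of C). Let S : F_q^n → F_q^{p-r} × F_q^r be a surjective linear map whose kernel is C, for some integer 0 ≤ r ≤ p. If q^r ≥ (q-1)ℓ + 1, then for every x ∈ F_q^n, every message m ∈ F_q^{p-r}, and every set I ⊆ {1,…,n} with |I| = ℓ, there exist y ∈ F_q^n and R ∈ F_q^r such that S(y) = (m, R), d(x,y) ≤ 1, and y_i = x_i for all i ∈ I. -/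
/-- Helper: if hammingDist x y ≤ 1 and y differs from x at i, they agree elsewhere. -/
lemma ham_unique_diff {n : ℕ} {F : Type} [DecidableEq F] {x y : Fin n → F}
    (h : hammingDist x y ≤ 1) {i j : Fin n} (hi : y i ≠ x i) (hj : j ≠ i) : y j = x j := by
  by_contra hjne
  have hmem : ∀ k ∈ ({i, j} : Finset (Fin n)), k ∈ ({k | x k ≠ y k} : Finset (Fin n)) := by
    intro k hk
    simp only [Finset.mem_insert, Finset.mem_singleton] at hk
    simp only [Finset.mem_filter, Finset.mem_univ, true_and]
    rcases hk with rfl | rfl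
    · exact fun h' => hi h'.symm
    · exact fun h' => hjne h'.symm
  have h2 : ({i, j} : Finset (Fin n)).card ≤ hammingDist x y := by
    rw [hammingDist]
    exact Finset.card_le_card (fun k hk => hmem k hk)
  rw [Finset.card_insert_of_notMem (by simp [hj.symm]), Finset.card_singleton] at h2
  omega

/-- With the q-ary Hamming code of length `n = (q^p-1)/(q-1)` (perfect with
radius 1), if `q^r ≥ (q-1)ℓ + 1`, the randomized wet paper syndrome coding problem always
has a solution for any `ℓ` locked coordinates. -/
theorem randomized_wet_paper_hamming_code
    (q p n r ℓ : ℕ) (F : Type) [Field F] [Fintype F] [DecidableEq F]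
    (hq : Fintype.card F = q) (hp : 2 ≤ p) (hn : n = (q ^ p - 1) / (q - 1)) (hr : r ≤ p)
    (C : Submodule F (Fin n → F)) (hk : Module.finrank F C = n - p)
    (hperf : ∀ v : Fin n → F, ∃! c, c ∈ C ∧ hammingDist v c ≤ 1)
    (S : (Fin n → F) →ₗ[F] (Fin (p - r) → F) × (Fin r → F))
    (hS_surj : Function.Surjective S)
    (hS_ker : LinearMap.ker S = C)
    (hineq : (q - 1) * ℓ + 1 ≤ q ^ r) :
    ∀ (x : Fin n → F) (m : Fin (p - r) → F) (I : Finset (Fin n)), I.card = ℓ →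
      ∃ (y : Fin n → F) (R : Fin r → F),
        S y = (m, R) ∧ hammingDist x y ≤ 1 ∧ ∀ i ∈ I, y i = x i := by
  intro x m I hI
  have hex : ∀ R : Fin r → F, ∃ y : Fin n → F, S y = (m, R) ∧ hammingDist x y ≤ 1 := by
    intro R
    obtain ⟨z, hz⟩ := hS_surj (m, R)
    obtain ⟨c, ⟨hcC, hcd⟩, -⟩ := hperf (x - z)
    refine ⟨z + c, ?_, ?_⟩
    · have hc0 : S c = 0 := by rw [← hS_ker] at hcC; exact hcC
      rw [map_add, hz, hc0, add_zero]
    · have heq : hammingDist x (z + c) = hammingDist (x - z) c := by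
        rw [hammingDist_eq_hammingNorm, hammingDist_eq_hammingNorm]
        congr 1; ring
      rw [heq]; exact hcd
  choose f hf1 hf2 using hex
  by_contra hcon
  push_neg at hcon
  have hbad : ∀ R : Fin r → F, ∃ i ∈ I, f R i ≠ x i := by
    intro R
    obtain ⟨i, hiI, hine⟩ := hcon (f R) R (hf1 R) (hf2 R)
    exact ⟨i, hiI, hine⟩
  choose i hiI hine using hbad
  set g : (Fin r → F) → Fin n × F := fun R => (i R, f R (i R)) with hg
  have hginj : Function.Injective g := by
    intro R R' hRR
    have h1 : i R = i R' := congrArg Prod.fst hRR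
    have h2 : f R (i R) = f R' (i R') := congrArg Prod.snd hRR
    have hfeq : f R = f R' := by
      funext j
      by_cases hj : j = i R
      · subst hj; rw [h2, h1]
      · rw [ham_unique_diff (hf2 R) (hine R) hj,
          ham_unique_diff (hf2 R') (hine R') (h1 ▸ hj)]
    have := (hf1 R).symm.trans (hfeq ▸ hf1 R')
    exact (Prod.mk.injEq _ _ _ _ ▸ this).2
  -- g maps into T
  set T : Finset (Fin n × F) := I.biUnion (fun j => {j} ×ˢ ({x j}ᶜ : Finset F)) with hT
  have hmaps : ∀ R, g R ∈ T := by
    intro R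
    rw [hT, Finset.mem_biUnion]
    exact ⟨i R, hiI R, by simp [hg, hine R]⟩
  have hcard1 : Fintype.card (Fin r → F) ≤ T.card :=
    Finset.card_le_card_of_injOn g (fun R _ => hmaps R)
      (fun a _ b _ h => hginj h)
  have hqr : Fintype.card (Fin r → F) = q ^ r := by
    rw [Fintype.card_fun, hq, Fintype.card_fin]
  have hcard2 : T.card ≤ ℓ * (q - 1) := by
    rw [hT]
    calc (I.biUnion (fun j => {j} ×ˢ ({x j}ᶜ : Finset F))).card
        ≤ ∑ j ∈ I, ({j} ×ˢ ({x j}ᶜ : Finset F)).card := Finset.card_biUnion_le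
      _ = ∑ j ∈ I, (q - 1) := by
          refine Finset.sum_congr rfl fun j _ => ?_
          rw [Finset.card_product, Finset.card_singleton, one_mul,
            Finset.card_compl, Finset.card_singleton, hq]
      _ = ℓ * (q - 1) := by rw [Finset.sum_const, hI, smul_eq_mul]
  rw [hqr] at hcard1
  have hfin : q ^ r ≤ ℓ * (q - 1) := le_trans hcard1 hcard2
  rw [mul_comm] at hfin
  omega
end

section
/- Let q be a prime power, p ≥ 2 an integer, n = (q^p - 1)/(q - 1), and let C be a linear code of length n and dimension n - p over a finite field F_q that is perfect with radius 1. Let S : F_q^n → F_q × F_q^{p-1} be a surjective linear map whose kernel is C. If ℓ ≤ (q^{p-1} - 1)/(q - 1), then for every x ∈ F_q^n, every message symbol m ∈ F_q, and every set I ⊆ {1,…,n} with |I| = ℓ, there exist y ∈ F_q^n and R ∈ F_q^{p-1} such that S(y) = (m, R), d(x,y) ≤ 1, and y_i = x_i for all i ∈ I. In other words, using a Hamming code one can always embed at least one information symbol whenever at most a fraction (q^{p-1}-1)/((q-1)·n) ≈ 1/q of the coordinates are locked. -/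
/-- With the q-ary Hamming code of length `n = (q^p-1)/(q-1)` and `r = p - 1`
randomized syndrome symbols, one can always embed at least one information symbol whenever
at most `(q^(p-1)-1)/(q-1) ≈ n/q` coordinates are locked. -/
theorem hamming_code_embed_one_symbol
    (q p n ℓ : ℕ) (F : Type) [Field F] [Fintype F] [DecidableEq F]
    (hq : Fintype.card F = q) (hp : 2 ≤ p) (hn : n = (q ^ p - 1) / (q - 1))
    (C : Submodule F (Fin n → F)) (hk : Module.finrank F C = n - p)
    (hperf : ∀ v : Fin n → F, ∃! c, c ∈ C ∧ hammingDist v c ≤ 1)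
    (S : (Fin n → F) →ₗ[F] F × (Fin (p - 1) → F))
    (hS_surj : Function.Surjective S)
    (hS_ker : LinearMap.ker S = C)
    (hℓ : ℓ ≤ (q ^ (p - 1) - 1) / (q - 1)) :
    ∀ (x : Fin n → F) (m : F) (I : Finset (Fin n)), I.card = ℓ →
      ∃ (y : Fin n → F) (R : Fin (p - 1) → F),
        S y = (m, R) ∧ hammingDist x y ≤ 1 ∧ ∀ i ∈ I, y i = x i := by
  classical
  intro x m I hI
  have hq2 : 2 ≤ q := hq ▸ Fintype.one_lt_card
  -- the first syndrome coordinate as a linear map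
  set f : (Fin n → F) →ₗ[F] F := (LinearMap.fst F F _).comp S with hf
  have hfS : ∀ v, f v = (S v).1 := fun v => rfl
  -- singles have hamming norm ≤ 1
  have hnorm_single : ∀ (i : Fin n) (a : F), hammingNorm (Pi.single i a : Fin n → F) ≤ 1 := by
    intro i a
    have hss : (Finset.univ.filter fun j => (Pi.single i a : Fin n → F) j ≠ 0) ⊆ {i} := by
      intro j hj
      simp only [Finset.mem_filter, Finset.mem_univ, true_and, ne_eq] at hj
      simp only [Finset.mem_singleton]
      by_contra hji
      exact hj (Pi.single_eq_of_ne (M := fun _ => F) hji a)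
    calc hammingNorm (Pi.single i a : Fin n → F)
        = (Finset.univ.filter fun j => (Pi.single i a : Fin n → F) j ≠ 0).card := rfl
      _ ≤ ({i} : Finset (Fin n)).card := Finset.card_le_card hss
      _ = 1 := Finset.card_singleton i
  -- S is injective on vectors of norm ≤ 1
  have hinj : ∀ w₁ w₂ : Fin n → F, hammingNorm w₁ ≤ 1 → hammingNorm w₂ ≤ 1 →
      S w₁ = S w₂ → w₁ = w₂ := by
    intro w₁ w₂ h1 h2 hSw
    have hker : w₁ - w₂ ∈ C := by
      rw [← hS_ker, LinearMap.mem_ker, map_sub, hSw, sub_self]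
    obtain ⟨c, _, huniq⟩ := hperf w₁
    have e0 : (0 : Fin n → F) = c :=
      huniq 0 ⟨C.zero_mem, by simpa [hammingDist_zero_right] using h1⟩
    have e1 : w₁ - w₂ = c :=
      huniq _ ⟨hker, by
        rw [hammingDist_comm, hammingDist_eq_hammingNorm, neg_sub, sub_add_cancel]
        exact h2⟩
    have : w₁ - w₂ = 0 := e1.trans e0.symm
    exact sub_eq_zero.mp this
  -- decompose a vector of norm ≤ 1 that is nonzero as a single
  have hdecomp : ∀ w : Fin n → F, hammingNorm w ≤ 1 → w ≠ 0 →
      ∃ i, w i ≠ 0 ∧ w = Pi.single i (w i) := by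
    intro w hw hw0
    obtain ⟨i, hi⟩ := Function.ne_iff.mp hw0
    simp only [Pi.zero_apply] at hi
    refine ⟨i, hi, funext fun j => ?_⟩
    rcases eq_or_ne j i with rfl | hji
    · simp
    · rw [Pi.single_eq_of_ne hji]
      by_contra hwj
      have hsub : ({i, j} : Finset (Fin n)) ⊆ Finset.univ.filter (fun k => w k ≠ 0) := by
        intro k hk
        simp only [Finset.mem_insert, Finset.mem_singleton] at hk
        simp only [Finset.mem_filter, Finset.mem_univ, true_and, ne_eq]
        rcases hk with rfl | rfl
        · exact hi
        · exact hwj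
      have : 2 ≤ hammingNorm w := by
        have hc : ({i, j} : Finset (Fin n)).card = 2 := by
          rw [Finset.card_insert_of_notMem (by simpa using (Ne.symm hji)),
            Finset.card_singleton]
        calc 2 = ({i, j} : Finset (Fin n)).card := hc.symm
          _ ≤ (Finset.univ.filter (fun k => w k ≠ 0)).card := Finset.card_le_card hsub
          _ = hammingNorm w := rfl
      omega
  have hsingle_smul : ∀ (i : Fin n) (a : F), (Pi.single i a : Fin n → F) = a • (Pi.single i 1 : Fin n → F) := by
    intro i a
    funext j
    rcases eq_or_ne j i with rfl | hji
    · simp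
    · simp [Pi.single_eq_of_ne hji]
  -- the set of coordinates whose column has zero first syndrome component
  set Z : Finset (Fin n) := {i | f (Pi.single i 1) = 0} with hZ
  -- a bijection counting |Z| * (q-1) + 1 = q^(p-1)
  set ψ : Option (↥Z × {a : F // a ≠ 0}) → (Fin n → F) :=
    fun o => Option.elim o 0 (fun ia => Pi.single ia.1.1 ia.2.1) with hψ
  set φ : Option (↥Z × {a : F // a ≠ 0}) → (Fin (p - 1) → F) :=
    fun o => (S (ψ o)).2 with hφ
  have hψnorm : ∀ o, hammingNorm (ψ o) ≤ 1 := by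
    intro o
    match o with
    | none => simp [hψ]
    | some (i, a) => simpa [hψ] using hnorm_single i.1 a.1
  -- helper: the full syndrome of elements in the range of ψ
  have hfull : ∀ o, S (ψ o) = (0, φ o) := by
    intro o
    match o with
    | none => simp [hψ, hφ]; rfl
    | some (i, a) =>
      have hiZ : f (Pi.single i.1 1) = 0 := by
        have h2 := i.2
        simp only [hZ, Finset.mem_filter] at h2
        exact h2.2
      have h1 : (S (ψ (some (i, a)))).1 = 0 := by
        simp only [hψ, Option.elim]
        rw [← hfS, hsingle_smul i.1 a.1, map_smul, hiZ, smul_zero]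
      exact Prod.ext h1 rfl
  have hφbij : Function.Bijective φ := by
    constructor
    · intro o₁ o₂ hoo
      have hS12 : S (ψ o₁) = S (ψ o₂) := by
        rw [hfull o₁, hfull o₂, hoo]
      have hw := hinj _ _ (hψnorm o₁) (hψnorm o₂) hS12
      match o₁, o₂ with
      | none, none => rfl
      | none, some (i, a) =>
        exfalso
        apply a.2
        have := congrFun hw i.1
        simpa [hψ] using this.symm
      | some (i, a), none =>
        exfalso
        apply a.2
        have := congrFun hw i.1
        simpa [hψ] using this
      | some (i, a), some (j, b) =>
        simp only [hψ, Option.elim] at hw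
        have hij : i.1 = j.1 := by
          by_contra hij
          have := congrFun hw i.1
          rw [Pi.single_eq_same, Pi.single_eq_of_ne hij] at this
          exact a.2 this
        have hab : a.1 = b.1 := by
          have := congrFun hw i.1
          rwa [Pi.single_eq_same, hij, Pi.single_eq_same] at this
        congr 1
        exact Prod.ext (Subtype.ext hij) (Subtype.ext hab)
    · intro s
      obtain ⟨v, hv⟩ := hS_surj (0, s)
      obtain ⟨c, ⟨hcC, hcd⟩, _⟩ := hperf v
      set w := v - c with hw
      have hSw : S w = (0, s) := by
        have : S c = 0 := by rw [← LinearMap.mem_ker, hS_ker]; exact hcC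
        rw [hw, map_sub, this, sub_zero, hv]
      have hwn : hammingNorm w ≤ 1 := by
        rw [hw, sub_eq_neg_add, ← hammingDist_eq_hammingNorm, hammingDist_comm]; exact hcd
      rcases eq_or_ne w 0 with hw0 | hw0
      · refine ⟨none, ?_⟩
        have h0 : S (0 : Fin n → F) = (0, s) := hw0 ▸ hSw
        rw [map_zero] at h0
        have h2 := (Prod.ext_iff.mp h0).2
        simpa [hφ, hψ] using h2
      · obtain ⟨i, hwi, hwsingle⟩ := hdecomp w hwn hw0
        have hiZ : i ∈ Z := by
          have h1 : (S w).1 = 0 := by rw [hSw]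
          rw [hwsingle, ← hfS, hsingle_smul i (w i), map_smul, smul_eq_mul] at h1
          rcases mul_eq_zero.mp h1 with h | h
          · exact absurd h hwi
          · simpa [hZ] using h
        refine ⟨some (⟨i, hiZ⟩, ⟨w i, hwi⟩), ?_⟩
        simp only [hφ, hψ, Option.elim]
        rw [← hwsingle, hSw]
  -- cardinality bookkeeping
  have hcard_ne : Fintype.card {a : F // a ≠ 0} = q - 1 := by
    rw [Fintype.card_subtype_compl, Fintype.card_subtype_eq (0 : F), hq]
  have hcount : Z.card * (q - 1) + 1 = q ^ (p - 1) := by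
    have := Fintype.card_of_bijective hφbij
    rwa [Fintype.card_option, Fintype.card_prod, Fintype.card_coe, hcard_ne,
      Fintype.card_fun, Fintype.card_fin, hq] at this
  set t := (q ^ (p - 1) - 1) / (q - 1) with ht
  have hdvd1 : (q - 1) ∣ q ^ (p - 1) - 1 := by
    have := Nat.sub_dvd_pow_sub_pow q 1 (p - 1)
    simpa using this
  have htmul : t * (q - 1) = q ^ (p - 1) - 1 := Nat.div_mul_cancel hdvd1
  have hA1 : 1 ≤ q ^ (p - 1) := Nat.one_le_pow _ _ (by omega)
  have hZt : Z.card = t := by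
    have h1 : Z.card * (q - 1) = t * (q - 1) := by omega
    exact Nat.eq_of_mul_eq_mul_right (by omega) h1
  -- n is large: n > 2t
  have hdvd2 : (q - 1) ∣ q ^ p - 1 := by
    have := Nat.sub_dvd_pow_sub_pow q 1 p
    simpa using this
  have hnmul : n * (q - 1) = q ^ p - 1 := by
    rw [hn]; exact Nat.div_mul_cancel hdvd2
  have hqp : q ^ p = q * q ^ (p - 1) := by
    conv_lhs => rw [show p = 1 + (p - 1) by omega]
    rw [pow_add, pow_one]
  have h2t : 2 * t < n := by
    have key : 2 * t * (q - 1) < n * (q - 1) := by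
      rw [hnmul, hqp, mul_assoc, htmul]
      obtain ⟨B, hB⟩ : ∃ B, q * q ^ (p - 1) = B := ⟨_, rfl⟩
      have hB2 : 2 * q ^ (p - 1) ≤ B := by
        rw [← hB]; exact Nat.mul_le_mul_right _ hq2
      rw [hB]
      omega
    exact Nat.lt_of_mul_lt_mul_right key
  -- find a free coordinate outside I with nonzero column
  have hfree : ∃ i : Fin n, i ∉ I ∧ i ∉ Z := by
    have hcardIZ : (I ∪ Z).card ≤ ℓ + t := by
      calc (I ∪ Z).card ≤ I.card + Z.card := Finset.card_union_le I Z
        _ = ℓ + t := by rw [hI, hZt]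
    have hninst : ((I ∪ Z)ᶜ).Nonempty := by
      rw [← Finset.card_pos, Finset.card_compl, Fintype.card_fin]
      omega
    obtain ⟨i, hi⟩ := hninst
    rw [Finset.mem_compl, Finset.mem_union] at hi
    exact ⟨i, fun h => hi (Or.inl h), fun h => hi (Or.inr h)⟩
  obtain ⟨i, hiI, hiZ⟩ := hfree
  have hfei : f (Pi.single i 1) ≠ 0 := by
    simpa [hZ] using hiZ
  -- construct y
  set a : F := (m - f x) * (f (Pi.single i 1))⁻¹ with ha
  set y : Fin n → F := x + Pi.single i a with hy
  have hfy : f y = m := by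
    rw [hy, map_add, hsingle_smul i a, map_smul, smul_eq_mul, ha]
    field_simp
    ring
  refine ⟨y, (S y).2, ?_, ?_, ?_⟩
  · exact Prod.ext hfy rfl
  · rw [hammingDist_comm, hammingDist_eq_hammingNorm, neg_add_eq_sub]
    have : x - y = Pi.single i (-a) := by
      funext j
      rcases eq_or_ne j i with rfl | hji
      · simp [hy]
      · simp [hy, Pi.single_eq_of_ne hji]
    rw [this]
    exact hnorm_single _ _
  · intro j hj
    have hji : j ≠ i := fun h => hiI (h ▸ hj)
    simp [hy, Pi.single_eq_of_ne hji]
end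

section
/- Let C be a ternary linear code of length 11 and dimension 6 over F_3 that is perfect with radius 2 (i.e., every vector of F_3^11 lies at Hamming distance at most 2 from exactly one codeword of C), and let S : F_3^11 → F_3^{5-r} × F_3^r be a surjective linear map whose kernel is C, for some 0 ≤ r ≤ 5. If ℓ ≤ 11 and 3^r ≥ 1 + 44·ℓ - 2·ℓ², then for every x ∈ F_3^11, every message m ∈ F_3^{5-r}, and every set I ⊆ {1,…,11} with |I| = ℓ, there exist y ∈ F_3^11 and R ∈ F_3^r such that S(y) = (m, R), d(x,y) ≤ 2, and y_i = x_i for all i ∈ I. -/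
open Finset Function

private def NB (k : ℕ) (s : Finset (Fin 11)) : Finset (Fin 11 → ZMod 3) :=
  Finset.univ.filter (fun f => hammingNorm f ≤ k ∧ ∀ i ∉ s, f i = 0)

private lemma mem_NB {k s} {f : Fin 11 → ZMod 3} :
    f ∈ NB k s ↔ hammingNorm f ≤ k ∧ ∀ i ∉ s, f i = 0 := by
  simp [NB]

private lemma hammingNorm_eq (f : Fin 11 → ZMod 3) :
    hammingNorm f = (Finset.univ.filter (fun i => f i ≠ 0)).card := rfl

private lemma norm_update_zero (f : Fin 11 → ZMod 3) (i : Fin 11) (hf : f i ≠ 0) :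
    hammingNorm (Function.update f i 0) + 1 = hammingNorm f := by
  rw [hammingNorm_eq, hammingNorm_eq]
  have h : (Finset.univ.filter (fun j => Function.update f i 0 j ≠ 0)) =
      (Finset.univ.filter (fun j => f j ≠ 0)).erase i := by
    ext j
    by_cases hj : j = i <;> simp [Function.update, hj]
  rw [h, Finset.card_erase_add_one (by simp [hf])]

private lemma norm_update_ne (g : Fin 11 → ZMod 3) (i : Fin 11) (a : ZMod 3)
    (hg : g i = 0) (ha : a ≠ 0) :
    hammingNorm (Function.update g i a) = hammingNorm g + 1 := by
  have := norm_update_zero (Function.update g i a) i (by simp [ha])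
  rw [Function.update_idem] at this
  rw [show Function.update g i (0 : ZMod 3) = g from by
    rw [← hg, Function.update_eq_self]] at this
  omega

private lemma NB_insert (k : ℕ) (s : Finset (Fin 11)) (i : Fin 11) (hi : i ∉ s) :
    (NB (k+1) (insert i s)).card = (NB (k+1) s).card + 2 * (NB k s).card := by
  classical
  have hsplit : NB (k+1) (insert i s) =
      ((NB (k+1) (insert i s)).filter (fun f => f i = 0)) ∪
      ((NB (k+1) (insert i s)).filter (fun f => f i = 1)) ∪
      ((NB (k+1) (insert i s)).filter (fun f => f i = 2)) := by
    ext f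
    simp only [Finset.mem_union, Finset.mem_filter]
    constructor
    · intro hf
      have h3 : ∀ a : ZMod 3, a = 0 ∨ a = 1 ∨ a = 2 := by decide
      have : f i = 0 ∨ f i = 1 ∨ f i = 2 := h3 _
      tauto
    · tauto
  have hzero : (NB (k+1) (insert i s)).filter (fun f => f i = 0) = NB (k+1) s := by
    ext f
    simp only [Finset.mem_filter, mem_NB, Finset.mem_insert]
    constructor
    · rintro ⟨⟨h1, h2⟩, h3⟩
      refine ⟨h1, fun j hj => ?_⟩
      by_cases hji : j = i
      · rw [hji]; exact h3
      · exact h2 j (by tauto)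
    · rintro ⟨h1, h2⟩
      exact ⟨⟨h1, fun j hj => h2 j (fun h => hj (Or.inr h))⟩, h2 i hi⟩
  have hslice : ∀ a : ZMod 3, a ≠ 0 →
      ((NB (k+1) (insert i s)).filter (fun f => f i = a)).card = (NB k s).card := by
    intro a ha
    apply Finset.card_bij' (fun f _ => Function.update f i 0) (fun g _ => Function.update g i a)
    · rintro f hf
      rw [Finset.mem_filter] at hf
      rw [Function.update_idem, ← hf.2, Function.update_eq_self]
    · rintro g hg
      rw [mem_NB] at hg
      rw [Function.update_idem, ← hg.2 i hi, Function.update_eq_self]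
    · rintro f hf
      rw [Finset.mem_filter, mem_NB] at hf
      obtain ⟨⟨h1, h2⟩, h3⟩ := hf
      rw [mem_NB]
      constructor
      · have := norm_update_zero f i (by rw [h3]; exact ha)
        omega
      · intro j hj
        by_cases hji : j = i
        · subst hji; simp
        · rw [Function.update_of_ne hji]
          exact h2 j (by simp [hji, hj])
    · rintro g hg
      rw [mem_NB] at hg
      obtain ⟨h1, h2⟩ := hg
      have hgi : g i = 0 := h2 i hi
      rw [Finset.mem_filter, mem_NB]
      refine ⟨⟨?_, ?_⟩, by simp⟩
      · rw [norm_update_ne g i a hgi ha]; omega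
      · intro j hj
        rw [Finset.mem_insert] at hj
        push_neg at hj
        rw [Function.update_of_ne hj.1]
        exact h2 j hj.2
  have dd : ∀ a b : ZMod 3, a ≠ b → Disjoint
      ((NB (k+1) (insert i s)).filter (fun f => f i = a))
      ((NB (k+1) (insert i s)).filter (fun f => f i = b)) := by
    intro a b hab
    rw [Finset.disjoint_left]
    intro f hfa hfb
    rw [Finset.mem_filter] at hfa hfb
    exact hab (hfa.2 ▸ hfb.2)
  rw [hsplit, Finset.card_union_of_disjoint (by
      rw [Finset.disjoint_union_left]
      exact ⟨dd 0 2 (by decide), dd 1 2 (by decide)⟩),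
    Finset.card_union_of_disjoint (dd 0 1 (by decide)), hzero,
    hslice 1 (by decide), hslice 2 (by decide)]
  ring

private lemma NB_empty_set (k : ℕ) : NB k ∅ = {0} := by
  ext f
  rw [mem_NB, Finset.mem_singleton]
  constructor
  · rintro ⟨-, h⟩
    funext j
    exact h j (Finset.notMem_empty j)
  · rintro rfl
    simp

private lemma NB_zero_set (s : Finset (Fin 11)) : NB 0 s = {0} := by
  ext f
  rw [mem_NB, Finset.mem_singleton]
  constructor
  · rintro ⟨h, -⟩
    exact hammingNorm_eq_zero.mp (Nat.le_zero.mp h)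
  · rintro rfl
    simp

private lemma card_NB1 (s : Finset (Fin 11)) : (NB 1 s).card = 2 * s.card + 1 := by
  classical
  induction s using Finset.induction_on with
  | empty => rw [NB_empty_set]; simp
  | insert i s hi ih =>
    rw [show (1:ℕ) = 0 + 1 from rfl, NB_insert 0 s i hi, NB_zero_set,
      Finset.card_insert_of_notMem hi]
    simp at ih ⊢
    omega

private lemma card_NB2 (s : Finset (Fin 11)) : (NB 2 s).card = 2 * s.card ^ 2 + 1 := by
  classical
  induction s using Finset.induction_on with
  | empty => rw [NB_empty_set]; simp
  | insert i s hi ih =>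
    rw [show (2:ℕ) = 1 + 1 from rfl, NB_insert 1 s i hi, card_NB1,
      Finset.card_insert_of_notMem hi]
    norm_num
    rw [ih]
    ring

/-- For the ternary `[11,6]` Golay code (perfect with radius 2), if
`3^r ≥ 1 + 44ℓ - 2ℓ²` (and `ℓ ≤ 11`), the randomized wet paper syndrome coding problem
always has a solution for any `ℓ` locked coordinates. -/
theorem randomized_wet_paper_ternary_golay
    (r ℓ : ℕ) (hr : r ≤ 5)
    (C : Submodule (ZMod 3) (Fin 11 → ZMod 3))
    (hk : Module.finrank (ZMod 3) C = 6)
    (hperf : ∀ v : Fin 11 → ZMod 3, ∃! c, c ∈ C ∧ hammingDist v c ≤ 2)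
    (S : (Fin 11 → ZMod 3) →ₗ[ZMod 3] (Fin (5 - r) → ZMod 3) × (Fin r → ZMod 3))
    (hS_surj : Function.Surjective S)
    (hS_ker : LinearMap.ker S = C)
    (hℓ : ℓ ≤ 11)
    (hineq : (1 + 44 * ℓ - 2 * ℓ ^ 2 : ℤ) ≤ 3 ^ r) :
    ∀ (x : Fin 11 → ZMod 3) (m : Fin (5 - r) → ZMod 3) (I : Finset (Fin 11)), I.card = ℓ →
      ∃ (y : Fin 11 → ZMod 3) (R : Fin r → ZMod 3),
        S y = (m, R) ∧ hammingDist x y ≤ 2 ∧ ∀ i ∈ I, y i = x i := by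
  classical
  intro x m I hI
  -- injectivity of S on the radius-2 ball
  have hinj : ∀ e e' : Fin 11 → ZMod 3, hammingNorm e ≤ 2 → hammingNorm e' ≤ 2 →
      S e = S e' → e = e' := by
    intro e e' he he' hSe
    have hc : e - e' ∈ C := by
      rw [← hS_ker, LinearMap.mem_ker, map_sub, hSe, sub_self]
    obtain ⟨c, -, huniq⟩ := hperf e
    have h1 : (0 : Fin 11 → ZMod 3) = c :=
      huniq 0 ⟨C.zero_mem, by rw [hammingDist_zero_right]; exact he⟩
    have h2 : e - e' = c := by
      refine huniq (e - e') ⟨hc, ?_⟩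
      rw [hammingDist_comm, hammingDist_eq_hammingNorm, neg_sub, sub_add_cancel]
      exact he'
    have : e - e' = 0 := h2.trans h1.symm
    exact sub_eq_zero.mp this
  -- every syndrome is achieved in the radius-2 ball
  have hex : ∀ t, ∃ e, hammingNorm e ≤ 2 ∧ S e = t := by
    intro t
    obtain ⟨v, hv⟩ := hS_surj t
    obtain ⟨c, ⟨hcC, hcd⟩, -⟩ := hperf v
    refine ⟨v - c, ?_, ?_⟩
    · rw [sub_eq_neg_add, ← hammingDist_eq_hammingNorm, hammingDist_comm]; exact hcd
    · have hc0 : S c = 0 := by rw [← LinearMap.mem_ker, hS_ker]; exact hcC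
      rw [map_sub, hc0, sub_zero, hv]
  set m' := m - (S x).1 with hm'
  by_cases hgood : ∃ e, hammingNorm e ≤ 2 ∧ (∀ i ∈ I, e i = 0) ∧ (S e).1 = m'
  · obtain ⟨e, he1, he2, he3⟩ := hgood
    refine ⟨x + e, (S (x + e)).2, ?_, ?_, ?_⟩
    · have h1 : (S (x + e)).1 = m := by
        rw [map_add, Prod.fst_add, he3, hm']
        ring
      exact Prod.ext h1 rfl
    · rw [hammingDist_eq_hammingNorm, neg_add_cancel_left]
      exact he1
    · intro i hiI
      simp [he2 i hiI]
  · exfalso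
    push_neg at hgood
    set Full := NB 2 Finset.univ with hFull
    set B := NB 2 Iᶜ with hB
    have hBF : B ⊆ Full := by
      intro f hf
      rw [mem_NB] at hf ⊢
      exact ⟨hf.1, fun i hi => absurd (Finset.mem_univ i) hi⟩
    choose F hF1 hF2 using fun R : Fin r → ZMod 3 => hex (m', R)
    have hmem : ∀ R, F R ∈ Full \ B := by
      intro R
      rw [Finset.mem_sdiff, mem_NB]
      refine ⟨⟨hF1 R, fun i hi => absurd (Finset.mem_univ i) hi⟩, ?_⟩
      intro hFB
      rw [mem_NB] at hFB
      refine hgood (F R) (hF1 R) (fun i hi => hFB.2 i (by simp [hi])) ?_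
      rw [hF2 R]
    have hFinj : Function.Injective F := by
      intro R R' h
      have := (hF2 R).symm.trans (by rw [h, hF2 R'])
      exact (Prod.mk.injEq _ _ _ _ ▸ this).2
    have hcard1 : (3 : ℕ) ^ r ≤ (Full \ B).card := by
      have h := Finset.card_le_card_of_injOn (s := (Finset.univ : Finset (Fin r → ZMod 3)))
        (t := Full \ B) F (fun R _ => hmem R) (hFinj.injOn)
      rw [Finset.card_univ] at h
      simpa using h
    have hcardFull : Full.card = 243 := by
      rw [hFull, card_NB2]; simp
    have hcardB : B.card = 2 * (11 - ℓ) ^ 2 + 1 := by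
      rw [hB, card_NB2, Finset.card_compl, hI]
      simp
    have hcardD : (Full \ B).card = 243 - (2 * (11 - ℓ) ^ 2 + 1) := by
      rw [Finset.card_sdiff_of_subset hBF, hcardFull, hcardB]
    rw [hcardD] at hcard1
    have hle : 2 * (11 - ℓ) ^ 2 + 1 ≤ 243 := by
      have h1 : 11 - ℓ ≤ 11 := Nat.sub_le 11 ℓ
      have h2 : (11 - ℓ) ^ 2 ≤ 11 ^ 2 := Nat.pow_le_pow_left h1 2
      omega
    zify [hle, hℓ] at hcard1
    nlinarith [hcard1, hineq]
end

section
/- Let C be a linear code of length n and dimension k over a finite field F_q, let S : F_q^n → F_q^{n-k} be a surjective linear map whose kernel is C, and let D = C^⊥ be the dual code of C (which has dimension k⊥ = n - k), with minimum distance d⊥ satisfying k⊥ + d⊥ = n + 1 - g for a nonnegative integer g. Then for every x ∈ F_q^n and every set I ⊆ {1,…,n} of wet (locked) coordinates with |I| = ℓ ≥ d⊥ - 1, the set of achievable syndromes {S(y) : y ∈ F_q^n, y_i = x_i for all i ∈ I} is a coset of a linear subspace of F_q^{n-k} of dimension at least n - ℓ - g; hence one can surely embed n - ℓ - g symbols of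 F_q regardless of the positions of the wet coordinates. -/
/-- Wet paper coding via the dual distance: if the dual code `D = C^⊥` has
dimension `k⊥ = n - k` and minimum distance `d⊥` with `k⊥ + d⊥ = n + 1 - g`, then for any
`ℓ ≥ d⊥ - 1` wet coordinates the set of achievable syndromes is a coset of a subspace of
dimension at least `n - ℓ - g`; hence `n - ℓ - g` symbols can surely be embedded. -/
theorem wet_paper_achievable_syndromes_coset
    (q n k ℓ dperp g : ℕ) (F : Type) [Field F] [Fintype F] [DecidableEq F]
    (hq : Fintype.card F = q)
    (C : Submodule F (Fin n → F)) (hk : Module.finrank F C = k)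
    (S : (Fin n → F) →ₗ[F] (Fin (n - k) → F))
    (hS_surj : Function.Surjective S)
    (hS_ker : LinearMap.ker S = C)
    (D : Submodule F (Fin n → F))
    (hD : ∀ z, z ∈ D ↔ ∀ c ∈ C, ∑ i, z i * c i = 0)
    (hkperp : Module.finrank F D = n - k)
    (hd_lb : ∀ c ∈ D, c ≠ 0 → dperp ≤ hammingNorm c)
    (hd_ex : ∃ c ∈ D, c ≠ 0 ∧ hammingNorm c = dperp)
    (hg : (n - k) + dperp + g = n + 1)
    (hℓ : dperp - 1 ≤ ℓ)
    (x : Fin n → F) (I : Finset (Fin n)) (hI : I.card = ℓ) :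
    ∃ V : Submodule F (Fin (n - k) → F),
      (n : ℤ) - ℓ - g ≤ Module.finrank F V ∧
      {s : Fin (n - k) → F | ∃ y : Fin n → F, (∀ i ∈ I, y i = x i) ∧ S y = s}
        = (fun v => S x + v) '' (V : Set (Fin (n - k) → F)) := by
  classical
  have hkn : k ≤ n := by
    have h := Submodule.finrank_le C
    rw [hk, Module.finrank_pi] at h
    simpa using h
  have hd1 : 1 ≤ dperp := by
    obtain ⟨c, hc, hc0, hcn⟩ := hd_ex
    rcases Nat.eq_zero_or_pos dperp with h | h
    · exact absurd (hammingNorm_eq_zero.mp (by rw [hcn, h])) hc0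
    · exact h
  -- the projection onto the wet coordinates and its kernel W (dry-supported vectors)
  set P : (Fin n → F) →ₗ[F] ({i // i ∈ I} → F) :=
    LinearMap.funLeft F F (fun i : {i // i ∈ I} => (i : Fin n)) with hPdef
  set W : Submodule F (Fin n → F) := LinearMap.ker P with hWdef
  -- choose T ⊆ I with |T| = dperp - 1
  obtain ⟨T, hTI, hT⟩ : ∃ T ⊆ I, T.card = dperp - 1 :=
    Finset.exists_subset_card_eq (by omega)
  set Q : (Fin n → F) →ₗ[F] ({i // i ∈ T} → F) :=
    LinearMap.funLeft F F (fun i : {i // i ∈ T} => (i : Fin n)) with hQdef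
  -- the projection of C onto the T coordinates is everything
  have hQtop : Submodule.map Q C = ⊤ := by
    by_contra hne
    obtain ⟨φ, hφ0, hφ⟩ := Submodule.exists_dual_map_eq_bot_of_lt_top
      (lt_top_iff_ne_top.mpr hne) inferInstance
    set e : {i // i ∈ T} → ({i // i ∈ T} → F) :=
      fun t => fun j => if t = j then (1 : F) else 0 with hedef
    set z : Fin n → F :=
      fun i => if h : i ∈ T then φ (e ⟨i, h⟩) else 0 with hzdef
    have hz_eval : ∀ t : {i // i ∈ T}, z (t : Fin n) = φ (e t) := by
      intro t
      simp only [hzdef, dif_pos t.2]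
    have hzD : z ∈ D := by
      rw [hD]
      intro c hc
      have h1 : ∑ i, z i * c i = ∑ i ∈ T, z i * c i := by
        rw [Finset.sum_subset T.subset_univ]
        intro i _ hi
        simp [hzdef, dif_neg hi]
      have h2 : ∑ i ∈ T, z i * c i = ∑ t : {i // i ∈ T}, z (t : Fin n) * c (t : Fin n) := by
        rw [Finset.sum_coe_sort T (fun i => z i * c i)]
      have h3 : φ (Q c) = 0 := by
        have : Q c ∈ Submodule.map Q C := ⟨c, hc, rfl⟩
        have : φ (Q c) ∈ Submodule.map φ (Submodule.map Q C) :=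
          Submodule.mem_map_of_mem this
        rw [hφ] at this
        exact (Submodule.mem_bot F).mp this
      have h4 : φ (Q c) = ∑ t : {i // i ∈ T}, c (t : Fin n) * φ (e t) := by
        conv_lhs => rw [show Q c = ∑ t : {i // i ∈ T}, c (t : Fin n) • e t by
          simpa [hedef, hQdef, LinearMap.funLeft_apply] using pi_eq_sum_univ (Q c)]
        rw [map_sum]
        simp [smul_eq_mul]
      rw [h1, h2]
      rw [h4] at h3
      rw [← h3]
      apply Finset.sum_congr rfl
      intro t _
      rw [hz_eval t, mul_comm]
    have hzne : z ≠ 0 := by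
      intro hzz
      apply hφ0
      apply LinearMap.ext
      intro u
      have hu : u = ∑ t : {i // i ∈ T}, u t • e t := by
        simpa [hedef] using pi_eq_sum_univ u
      rw [hu, map_sum]
      simp only [map_smul, smul_eq_mul, LinearMap.zero_apply]
      apply Finset.sum_eq_zero
      intro t _
      have := congrFun hzz (t : Fin n)
      rw [hz_eval t] at this
      simp only [Pi.zero_apply] at this
      rw [this, mul_zero]
    have hnorm : hammingNorm z ≤ T.card := by
      apply Finset.card_le_card
      intro i hi
      simp only [Finset.mem_filter, Finset.mem_univ, true_and] at hi
      by_contra hiT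
      exact hi (by simp [hzdef, dif_neg hiT])
    have := hd_lb z hzD hzne
    omega
  -- rank computations
  have hrankQ : Module.finrank F (Submodule.map Q C) = dperp - 1 := by
    rw [hQtop, finrank_top, Module.finrank_pi, Fintype.card_coe, hT]
  -- Q factors through P, so finrank (map P C) ≥ dperp - 1
  have hfactor : dperp - 1 ≤ Module.finrank F (Submodule.map P C) := by
    set R : ({i // i ∈ I} → F) →ₗ[F] ({i // i ∈ T} → F) :=
      LinearMap.funLeft F F (fun t : {i // i ∈ T} => (⟨(t : Fin n), hTI t.2⟩ : {i // i ∈ I}))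
    have hQR : Q = R.comp P := rfl
    have : Submodule.map Q C = Submodule.map R (Submodule.map P C) := by
      rw [hQR, Submodule.map_comp]
    calc dperp - 1 = Module.finrank F (Submodule.map Q C) := hrankQ.symm
      _ = Module.finrank F (Submodule.map R (Submodule.map P C)) := by rw [this]
      _ ≤ Module.finrank F (Submodule.map P C) := Submodule.finrank_map_le R _
  -- finrank of C ⊓ W
  have hCW : Module.finrank F (Submodule.map P C) + Module.finrank F ↥(C ⊓ W) = k := by
    have hrn := LinearMap.finrank_range_add_finrank_ker (P.domRestrict C)
    rw [LinearMap.range_domRestrict, LinearMap.ker_domRestrict] at hrn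
    have he1 : (LinearMap.ker P).comap C.subtype = (C ⊓ W).comap C.subtype := by
      ext u
      simp [hWdef, Submodule.mem_comap, u.2]
    have he2 : Module.finrank F ↥((C ⊓ W).comap C.subtype) = Module.finrank F ↥(C ⊓ W) :=
      (Submodule.comapSubtypeEquivOfLe inf_le_left).finrank_eq
    rw [he1, he2] at hrn
    rw [← hk]
    have : Module.finrank F ↥C = Module.finrank F C := rfl
    omega
  -- finrank of W
  have hrankW : ℓ + Module.finrank F W = n := by
    have hrn := LinearMap.finrank_range_add_finrank_ker P
    have hsurj : LinearMap.range P = ⊤ :=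
      LinearMap.range_eq_top.mpr
        (LinearMap.funLeft_surjective_of_injective _ _ _ Subtype.val_injective)
    rw [hsurj, finrank_top, Module.finrank_pi, Fintype.card_coe, hI, Module.finrank_pi, Fintype.card_fin] at hrn
    rw [hWdef]
    omega
  -- the subspace V
  refine ⟨Submodule.map S W, ?_, ?_⟩
  · -- dimension bound
    have hrn := LinearMap.finrank_range_add_finrank_ker (S.domRestrict W)
    rw [LinearMap.range_domRestrict, LinearMap.ker_domRestrict] at hrn
    have he1 : (LinearMap.ker S).comap W.subtype = (C ⊓ W).comap W.subtype := by
      ext u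
      simp [hS_ker, Submodule.mem_comap, u.2]
    have he2 : Module.finrank F ↥((C ⊓ W).comap W.subtype) = Module.finrank F ↥(C ⊓ W) :=
      (Submodule.comapSubtypeEquivOfLe inf_le_right).finrank_eq
    rw [he1, he2] at hrn
    omega
  · -- coset description
    ext s
    simp only [Set.mem_setOf_eq, Set.mem_image, SetLike.mem_coe, Submodule.mem_map]
    constructor
    · rintro ⟨y, hy, rfl⟩
      refine ⟨S (y - x), ⟨y - x, ?_, rfl⟩, ?_⟩
      · show y - x ∈ LinearMap.ker P
        rw [LinearMap.mem_ker]
        ext t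
        simp [hPdef, LinearMap.funLeft_apply, sub_eq_zero_of_eq (hy (t : Fin n) t.2)]
      · rw [map_sub]; abel
    · rintro ⟨v, ⟨u, hu, rfl⟩, rfl⟩
      refine ⟨x + u, ?_, by rw [map_add]⟩
      intro i hi
      have hu0 : P u = 0 := hu
      have := congrFun hu0 ⟨i, hi⟩
      simp only [hPdef, LinearMap.funLeft_apply, Pi.zero_apply] at this
      simp [Pi.add_apply, this]
end
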